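/- In an anonymous hedonic game where each agent's preference over (task, coalition-size) pairs is single-peaked at one (SPAO), i.e., for each task, smaller coalitions are always weakly preferred, a Nash stable partition always exists. -/

import Mathlib

/-- Number of agents assigned to task `j` under partition `π`. -/
def coalSize {A τ : Type*} [Fintype A] [DecidableEq τ] (π : A → τ) (j : τ) : ℕ :=
  (Finset.univ.filter fun k => π k = j).card

/-- Size of coalition `S_j ∪ {i}`. -/
def joinSize {A τ : Type*} [Fintype A] [DecidableEq τ] (π : A → τ) (i : A) (j : τ) : ℕ :=
  if π i = j then coalSize π j else coalSize π j + 1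

namespace NashAux

variable {A τ : Type*} [DecidableEq τ]

/-- Number of agents of `s` assigned to `j`. -/
def sizeOn (s : Finset A) (π : A → τ) (j : τ) : ℕ := (s.filter fun k => π k = j).card

def joinOn (s : Finset A) (π : A → τ) (i : A) (j : τ) : ℕ :=
  if π i = j then sizeOn s π j else sizeOn s π j + 1

lemma sizeOn_congr {s : Finset A} {π π' : A → τ} (h : ∀ k ∈ s, π k = π' k) (j : τ) :
    sizeOn s π j = sizeOn s π' j := by
  unfold sizeOn
  congr 1
  apply Finset.filter_congr
  intro k hk
  simp [h k hk]

lemma sizeOn_erase [DecidableEq A] {s : Finset A} {i : A} (hi : i ∈ s) (π : A → τ) (j : τ) :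
    sizeOn s π j = sizeOn (s.erase i) π j + if π i = j then 1 else 0 := by
  unfold sizeOn
  conv_lhs => rw [← Finset.insert_erase hi]
  rw [Finset.filter_insert]
  split_ifs with h
  · rw [Finset.card_insert_of_notMem
      (fun hmem => (Finset.mem_erase.mp (Finset.mem_filter.mp hmem).1).1 rfl)]
  · simp

lemma sizeOn_update [DecidableEq A] {s : Finset A} {i : A} (hi : i ∈ s) (π : A → τ) (t j : τ) :
    sizeOn s (Function.update π i t) j
      = sizeOn (s.erase i) π j + if t = j then 1 else 0 := by
  rw [sizeOn_erase hi, Function.update_self]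
  congr 1
  exact (sizeOn_congr (fun k hk =>
    (Function.update_of_ne (Finset.ne_of_mem_erase hk) t π).symm) j).symm

lemma exists_max {β : Type*} {r : β → β → Prop}
    (htot : ∀ x y, r x y ∨ r y x) (htr : Transitive r)
    {γ : Type*} [Fintype γ] [Nonempty γ] (f : γ → β) :
    ∃ t0, ∀ t, r (f t0) (f t) := by
  classical
  have key : ∀ s : Finset γ, s.Nonempty → ∃ t0 ∈ s, ∀ t ∈ s, r (f t0) (f t) := by
    intro s
    induction s using Finset.induction with
    | empty => intro h; simp at h
    | insert a s ha ih =>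
      intro _
      by_cases hs : s.Nonempty
      · obtain ⟨t0, ht0, hmax⟩ := ih hs
        rcases htot (f a) (f t0) with h | h
        · refine ⟨a, Finset.mem_insert_self a s, ?_⟩
          intro t ht
          rcases Finset.mem_insert.mp ht with rfl | ht
          · rcases htot (f t) (f t) with h' | h' <;> exact h'
          · exact htr h (hmax t ht)
        · refine ⟨t0, Finset.mem_insert_of_mem ht0, ?_⟩
          intro t ht
          rcases Finset.mem_insert.mp ht with rfl | ht
          · exact h
          · exact hmax t ht
      · simp only [Finset.not_nonempty_iff_eq_empty] at hs
        subst hs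
        refine ⟨a, Finset.mem_insert_self a _, ?_⟩
        intro t ht
        rcases Finset.mem_insert.mp ht with rfl | ht
        · rcases htot (f t) (f t) with h' | h' <;> exact h'
        · simp at ht
  obtain ⟨t0, _, h⟩ := key Finset.univ ⟨Classical.arbitrary γ, Finset.mem_univ _⟩
  exact ⟨t0, fun t => h t (Finset.mem_univ t)⟩

section Game

variable [Fintype τ]
variable (tphi : τ) (R : A → τ × ℕ → τ × ℕ → Prop)

lemma Rrefl (htotal : ∀ i x y, R i x y ∨ R i y x) (i : A) (x : τ × ℕ) : R i x x := by
  rcases htotal i x x with h | h <;> exact h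

lemma Rstep (htotal : ∀ i x y, R i x y ∨ R i y x)
    (hvoid : ∀ (i : A) (p q : ℕ) (x : τ × ℕ),
      (R i (tphi, p) x ↔ R i (tphi, q) x) ∧ (R i x (tphi, p) ↔ R i x (tphi, q)))
    (hSPAO : ∀ (i : A) (t : τ), t ≠ tphi → ∀ p1 p2 : ℕ, p1 < p2 → R i (t, p1) (t, p2))
    (i : A) (t : τ) (p : ℕ) : R i (t, p) (t, p + 1) := by
  by_cases h : t = tphi
  · subst h
    exact ((hvoid i p (p + 1) (t, p)).2).mp (Rrefl R htotal i (t, p))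
  · exact hSPAO i t h p (p + 1) (Nat.lt_succ_self p)

/-- An agent is happy in the current state provided it has the base guarantee `hG`,
and the strong guarantee if it sits in the excess coalition. -/
lemma happy_of
    (htotal : ∀ i x y, R i x y ∨ R i y x)
    (htrans : ∀ i, Transitive (R i))
    (hvoid : ∀ (i : A) (p q : ℕ) (x : τ × ℕ),
      (R i (tphi, p) x ↔ R i (tphi, q) x) ∧ (R i x (tphi, p) ↔ R i x (tphi, q)))
    (hSPAO : ∀ (i : A) (t : τ), t ≠ tphi → ∀ p1 p2 : ℕ, p1 < p2 → R i (t, p1) (t, p2))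
    {s : Finset A} {s₀ : τ → ℕ} {π : A → τ} {tstar : τ}
    (hsize : ∀ j, sizeOn s π j = s₀ j + if j = tstar then 1 else 0)
    {i : A}
    (hG : ∀ t', R i (π i, s₀ (π i)) (t', s₀ t' + 1))
    (hGp : π i = tstar → ∀ t', R i (π i, s₀ (π i) + 1) (t', s₀ t' + 1))
    (j : τ) :
    R i (π i, sizeOn s π (π i)) (j, joinOn s π i j) := by
  unfold joinOn
  by_cases hji : π i = j
  · rw [if_pos hji, ← hji]
    exact Rrefl R htotal i _
  · rw [if_neg hji]
    by_cases hjt : j = tstar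
    · -- j is the excess coalition, π i ≠ tstar
      have hit : π i ≠ tstar := fun h => hji (h.trans hjt.symm)
      rw [hsize j, if_pos hjt, hsize (π i), if_neg hit]
      exact htrans i (hG j) (Rstep tphi R htotal hvoid hSPAO i j (s₀ j + 1))
    · rw [hsize j, if_neg hjt]
      by_cases hit : π i = tstar
      · rw [hsize (π i), if_pos hit]
        exact hGp hit j
      · rw [hsize (π i), if_neg hit]
        exact hG j

lemma chain [DecidableEq A]
    (htotal : ∀ i x y, R i x y ∨ R i y x)
    (htrans : ∀ i, Transitive (R i))
    (hvoid : ∀ (i : A) (p q : ℕ) (x : τ × ℕ),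
      (R i (tphi, p) x ↔ R i (tphi, q) x) ∧ (R i x (tphi, p) ↔ R i x (tphi, q)))
    (hSPAO : ∀ (i : A) (t : τ), t ≠ tphi → ∀ p1 p2 : ℕ, p1 < p2 → R i (t, p1) (t, p2))
    (s : Finset A) (s₀ : τ → ℕ) :
    ∀ (k : ℕ) (π : A → τ) (tstar : τ) (M : Finset A),
      M ⊆ s → s.card ≤ M.card + k →
      (∀ j, sizeOn s π j = s₀ j + if j = tstar then 1 else 0) →
      (∀ i ∈ s, ∀ t', R i (π i, s₀ (π i)) (t', s₀ t' + 1)) →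
      (∀ i ∈ M, ∀ t', R i (π i, s₀ (π i) + 1) (t', s₀ t' + 1)) →
      ∃ π' : A → τ, ∀ i ∈ s, ∀ j,
        R i (π' i, sizeOn s π' (π' i)) (j, joinOn s π' i j) := by
  haveI : Nonempty τ := ⟨tphi⟩
  intro k
  induction k with
  | zero =>
    intro π tstar M hMs hcard hsize hG hGp
    have hMeq : M = s := Finset.eq_of_subset_of_card_le hMs (by omega)
    refine ⟨π, fun i hi j => ?_⟩
    exact happy_of tphi R htotal htrans hvoid hSPAO hsize (hG i hi)
      (fun _ => hGp i (hMeq ▸ hi)) j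
  | succ k ih =>
    intro π tstar M hMs hcard hsize hG hGp
    by_cases hH : ∀ i ∈ s, ∀ j, R i (π i, sizeOn s π (π i)) (j, joinOn s π i j)
    · exact ⟨π, hH⟩
    · push_neg at hH
      obtain ⟨i, hi, j, hij⟩ := hH
      have hit : π i = tstar := by
        by_contra h
        exact hij (happy_of tphi R htotal htrans hvoid hSPAO hsize (hG i hi)
          (fun h' => absurd h' h) j)
      have hiM : i ∉ M := fun h => hij (happy_of tphi R htotal htrans hvoid hSPAO hsize
        (hG i hi) (fun _ => hGp i h) j)
      obtain ⟨tn, htn⟩ := exists_max (htotal i) (htrans i) (fun t => ((t, s₀ t + 1) : τ × ℕ))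
      have herase : ∀ j', sizeOn (s.erase i) π j' = s₀ j' := by
        intro j'
        have h1 : s₀ j' + (if j' = tstar then 1 else 0)
            = sizeOn (s.erase i) π j' + (if π i = j' then 1 else 0) := by
          rw [← hsize j']
          exact sizeOn_erase hi π j'
        rw [hit] at h1
        by_cases h : j' = tstar
        · rw [if_pos h, if_pos h.symm] at h1; omega
        · rw [if_neg h, if_neg (fun hh => h hh.symm)] at h1; omega
      refine ih (Function.update π i tn) tn (insert i M)
        (Finset.insert_subset hi hMs) ?_ ?_ ?_ ?_
      · rw [Finset.card_insert_of_notMem hiM]; omega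
      · intro j'
        rw [sizeOn_update hi, herase j']
        by_cases h : j' = tn
        · rw [if_pos h.symm, if_pos h]
        · rw [if_neg (fun hh => h hh.symm), if_neg h]
      · intro i' hi' t'
        by_cases h : i' = i
        · subst h
          rw [Function.update_self]
          exact htrans i' (Rstep tphi R htotal hvoid hSPAO i' tn (s₀ tn)) (htn t')
        · rw [Function.update_of_ne h]
          exact hG i' hi' t'
      · intro i' hi' t'
        rcases Finset.mem_insert.mp hi' with rfl | hM
        · rw [Function.update_self]
          exact htn t'
        · have h : i' ≠ i := fun hh => hiM (hh ▸ hM)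
          rw [Function.update_of_ne h]
          exact hGp i' hM t'

lemma eq_on [DecidableEq A]
    (htotal : ∀ i x y, R i x y ∨ R i y x)
    (htrans : ∀ i, Transitive (R i))
    (hvoid : ∀ (i : A) (p q : ℕ) (x : τ × ℕ),
      (R i (tphi, p) x ↔ R i (tphi, q) x) ∧ (R i x (tphi, p) ↔ R i x (tphi, q)))
    (hSPAO : ∀ (i : A) (t : τ), t ≠ tphi → ∀ p1 p2 : ℕ, p1 < p2 → R i (t, p1) (t, p2))
    (s : Finset A) :
    ∃ π : A → τ, ∀ i ∈ s, ∀ j,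
      R i (π i, sizeOn s π (π i)) (j, joinOn s π i j) := by
  haveI : Nonempty τ := ⟨tphi⟩
  induction s using Finset.induction with
  | empty => exact ⟨fun _ => tphi, by simp⟩
  | insert a s' ha ih =>
    obtain ⟨π₀, h₀⟩ := ih
    set s₀ : τ → ℕ := fun j => sizeOn s' π₀ j with hs₀
    obtain ⟨ta, hta⟩ := exists_max (htotal a) (htrans a) (fun t => ((t, s₀ t + 1) : τ × ℕ))
    have hmem : a ∈ insert a s' := Finset.mem_insert_self a s'
    refine chain tphi R htotal htrans hvoid hSPAO (insert a s') s₀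
      (insert a s').card (Function.update π₀ a ta) ta {a} ?_ ?_ ?_ ?_ ?_
    · simpa using hmem
    · simp
    · intro j
      rw [sizeOn_update hmem, Finset.erase_insert ha]
      by_cases h : j = ta
      · rw [if_pos h.symm, if_pos h]
      · rw [if_neg (fun hh => h hh.symm), if_neg h]
    · intro i hi t'
      rcases Finset.mem_insert.mp hi with rfl | hi'
      · rw [Function.update_self]
        exact htrans i (Rstep tphi R htotal hvoid hSPAO i ta (s₀ ta)) (hta t')
      · have hne : i ≠ a := fun hh => ha (hh ▸ hi')
        rw [Function.update_of_ne hne]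
        by_cases h : t' = π₀ i
        · rw [h]
          exact Rstep tphi R htotal hvoid hSPAO i (π₀ i) (s₀ (π₀ i))
        · have := h₀ i hi' t'
          unfold joinOn at this
          rw [if_neg (fun hh => h hh.symm)] at this
          exact this
    · intro i hi t'
      have : i = a := Finset.mem_singleton.mp hi
      subst this
      rw [Function.update_self]
      exact hta t'

end Game

end NashAux

/-- In an anonymous hedonic game (GRAPE instance) with agents `A`, tasks `τ`
(including the void task `tphi`, whose pairs are size-indifferent), where each agent's
preference `R i` is a total preorder over (task, coalition-size) pairs that is SPAO for every
non-void task (smaller coalitions weakly preferred), a Nash stable partition exists. -/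
theorem nash_stable_exists
    {A τ : Type*} [Fintype A] [Fintype τ] [DecidableEq τ]
    (tphi : τ)
    (R : A → τ × ℕ → τ × ℕ → Prop)
    (htotal : ∀ i x y, R i x y ∨ R i y x)
    (htrans : ∀ i, Transitive (R i))
    (hvoid : ∀ (i : A) (p q : ℕ) (x : τ × ℕ),
      (R i (tphi, p) x ↔ R i (tphi, q) x) ∧ (R i x (tphi, p) ↔ R i x (tphi, q)))
    (hSPAO : ∀ (i : A) (t : τ), t ≠ tphi → ∀ p1 p2 : ℕ, p1 < p2 → R i (t, p1) (t, p2)) :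
    ∃ π : A → τ, ∀ (i : A) (j : τ),
      R i (π i, coalSize π (π i)) (j, joinSize π i j) := by
  classical
  obtain ⟨π, h⟩ := NashAux.eq_on tphi R htotal htrans hvoid hSPAO Finset.univ
  exact ⟨π, fun i j => h i (Finset.mem_univ i) j⟩
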